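/- For all L in the domain L ≥ √(2V)·3^{1/4} (where both are defined), P₂(L) := 3L + 3√((2L² − 4√3 V)/3) satisfies P₂(L) > P₁(L) := 7√((3L² + 4√3 V)/21) − L. -/
import Mathlib


/-- For all `L ≥ √(2V)·3^(1/4)`, `P₂(L) = 3L + 3√((2L² - 4√3 V)/3)` exceeds
`P₁(L) = 7√((3L² + 4√3 V)/21) - L`. -/
theorem P2_gt_P1 (V : ℝ) (hV : 0 < V) :
    ∀ L : ℝ, Real.sqrt (2 * V) * (3 : ℝ) ^ ((1 : ℝ) / 4) ≤ L →
      7 * Real.sqrt ((3 * L ^ 2 + 4 * Real.sqrt 3 * V) / 21) - L <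
        3 * L + 3 * Real.sqrt ((2 * L ^ 2 - 4 * Real.sqrt 3 * V) / 3) := by
  intro L hL
  have h3 : (0:ℝ) < Real.sqrt 3 := Real.sqrt_pos.mpr (by norm_num)
  have hb : (0:ℝ) < (3:ℝ) ^ ((1:ℝ)/4) := Real.rpow_pos_of_pos (by norm_num) _
  have ha : 0 < Real.sqrt (2*V) := Real.sqrt_pos.mpr (by linarith)
  have hL0 : 0 < L := lt_of_lt_of_le (mul_pos ha hb) hL
  have hb2 : ((3:ℝ) ^ ((1:ℝ)/4))^2 = Real.sqrt 3 := by
    rw [← Real.rpow_natCast ((3:ℝ)^((1:ℝ)/4)) 2, ← Real.rpow_mul (by norm_num),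
      Real.sqrt_eq_rpow]
    norm_num
  have hsq : 2*V*Real.sqrt 3 ≤ L^2 := by
    have h := pow_le_pow_left₀ (mul_pos ha hb).le hL 2
    have ha2 : (Real.sqrt (2*V))^2 = 2*V := Real.sq_sqrt (by linarith)
    calc 2*V*Real.sqrt 3 = (Real.sqrt (2*V) * (3:ℝ)^((1:ℝ)/4))^2 := by
          rw [mul_pow, ha2, hb2]
      _ ≤ L^2 := h
  have h3V : 0 < Real.sqrt 3 * V := mul_pos h3 hV
  have key : Real.sqrt ((3*L^2 + 4*Real.sqrt 3*V)/21) < 4*L/7 := by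
    rw [Real.sqrt_lt' (by positivity)]
    nlinarith [hsq, h3V]
  have hnn : 0 ≤ Real.sqrt ((2*L^2 - 4*Real.sqrt 3*V)/3) := Real.sqrt_nonneg _
  linarith
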